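/- Let G and H be connected graphs, each with at least two vertices, and suppose the maximum degree of H satisfies Δ(H) ≤ n(H) − 2. Let W ⊆ V(G)×V(H), let S = {x ∈ V(G) : ∃ h ∈ V(H), (x,h) ∈ W}, and for each x ∈ S let T_x = {h ∈ V(H) : (x,h) ∈ W}. Then W is a resolving set of the lexicographic product G∘H if and only if: (i) S = V(G); (ii) T_x is a locating set of H for every x ∈ V(G); (iii) whenever x and y are adjacent vertices of G with N_G[x] = N_G[y], at least one of T_x, T_y is a strictly locating set of H; (iv) whenever x and y are nonadjacent vertices of G with N_G(x) = N_G(y), at least one of T_x, T_y is a dominating set of H. -/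

import Mathlib

/-- The lexicographic product of two simple graphs. -/
def lexProd {α β : Type*} (G : SimpleGraph α) (H : SimpleGraph β) :
    SimpleGraph (α × β) where
  Adj p q := G.Adj p.1 q.1 ∨ (p.1 = q.1 ∧ H.Adj p.2 q.2)
  symm := by
    refine ⟨?_⟩
    rintro ⟨g, h⟩ ⟨g', h'⟩ (hg | ⟨rfl, hh⟩)
    · exact Or.inl hg.symm
    · exact Or.inr ⟨rfl, hh.symm⟩
  loopless := by
    refine ⟨?_⟩
    rintro ⟨g, h⟩ (hg | ⟨-, hh⟩)
    · exact G.irrefl hg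
    · exact H.irrefl hh

/-- `W` is a resolving set of `G`. -/
def IsResolvingSet {α : Type*} (G : SimpleGraph α) (W : Set α) : Prop :=
  ∀ x y : α, x ≠ y → ∃ z ∈ W, G.dist x z ≠ G.dist y z

/-- `S` is a locating set of `G`. -/
def IsLocatingSet {α : Type*} (G : SimpleGraph α) (S : Set α) : Prop :=
  ∀ u ∉ S, ∀ v ∉ S, u ≠ v → G.neighborSet u ∩ S ≠ G.neighborSet v ∩ S

/-- `S` is a strictly locating set of `G`. -/
def IsStrictlyLocatingSet {α : Type*} (G : SimpleGraph α) (S : Set α) : Prop :=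
  IsLocatingSet G S ∧ ∀ u ∉ S, G.neighborSet u ∩ S ≠ S

/-- `S` is a dominating set of `G`. -/
def IsDominatingSet {α : Type*} (G : SimpleGraph α) (S : Set α) : Prop :=
  ∀ v ∉ S, ∃ u ∈ S, G.Adj v u

/-- `u` and `v` are true twins in `G`. -/
def AreTrueTwins {α : Type*} (G : SimpleGraph α) (u v : α) : Prop :=
  G.Adj u v ∧ G.neighborSet u \ {v} = G.neighborSet v \ {u}

/-- `u` and `v` are false twins in `G`. -/
def AreFalseTwins {α : Type*} (G : SimpleGraph α) (u v : α) : Prop :=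
  u ≠ v ∧ ¬ G.Adj u v ∧ G.neighborSet u \ {v} = G.neighborSet v \ {u}

/-- The path on `n` vertices `0, 1, …, n-1` (vertex `i` represents the
vertex labelled `i+1` in `{1, …, n}`). -/
def PathG (n : ℕ) : SimpleGraph (Fin n) where
  Adj i j := (i : ℕ) + 1 = (j : ℕ) ∨ (j : ℕ) + 1 = (i : ℕ)
  symm := ⟨fun i j h => Or.symm h⟩
  loopless := ⟨fun i h => by rcases h with h | h <;> omega⟩

/-- The cycle on `n` vertices `0, 1, …, n-1` (vertex `i` represents the
vertex labelled `i+1` in `{1, …, n}`). -/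
def CycleG (n : ℕ) : SimpleGraph (Fin n) where
  Adj i j := i ≠ j ∧ (((i : ℕ) + 1) % n = (j : ℕ) ∨ ((j : ℕ) + 1) % n = (i : ℕ))
  symm := ⟨fun i j h => ⟨h.1.symm, Or.symm h.2⟩⟩
  loopless := ⟨fun i h => h.1 rfl⟩

/-- The metric dimension of `G`: the minimum cardinality of a resolving set. -/
noncomputable def metricDim {α : Type*} [Fintype α] (G : SimpleGraph α) : ℕ :=
  sInf {n | ∃ W : Finset α, W.card = n ∧ IsResolvingSet G ↑W}

/-- The set `W ⊆ Fin n` contains the vertex with underlying value `k`. -/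
def valMem {n : ℕ} (W : Set (Fin n)) (k : ℕ) : Prop :=
  ∃ x ∈ W, (x : ℕ) = k

namespace Stmt16Aux

open SimpleGraph

variable {α β : Type*} {G : SimpleGraph α} {H : SimpleGraph β}

lemma exists_adj (hG : G.Connected) [Nontrivial α] (x : α) : ∃ z, G.Adj x z := by
  obtain ⟨y, hy⟩ := exists_ne x
  obtain ⟨p⟩ := hG x y
  cases p with
  | nil => exact absurd rfl hy.symm
  | cons h _ => exact ⟨_, h⟩

lemma proj_walk : ∀ {p q : α × β} (w : (lexProd G H).Walk p q),
    ∃ w' : G.Walk p.1 q.1, w'.length ≤ w.length := by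
  intro p q w
  induction w with
  | nil => exact ⟨Walk.nil, le_refl _⟩
  | @cons u v _ h w ih =>
    obtain ⟨w', hw'⟩ := ih
    rcases h with h | ⟨heq, -⟩
    · exact ⟨Walk.cons h w', by show w'.length + 1 ≤ w.length + 1; omega⟩
    · exact ⟨w'.copy heq.symm rfl, by simp only [Walk.length_copy]; show w'.length ≤ w.length + 1; omega⟩

/-- Lifting hom with constant second coordinate. -/
def constHom (G : SimpleGraph α) (H : SimpleGraph β) (b : β) : G →g lexProd G H :=
  ⟨fun a => (a, b), fun h => Or.inl h⟩

lemma lift_walk {x y : α} (hxy : x ≠ y) (h h' : β) (p : G.Walk x y) :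
    ∃ w : (lexProd G H).Walk (x, h) (y, h'), w.length = p.length := by
  cases p with
  | nil => exact absurd rfl hxy
  | @cons _ a _ ha q =>
    refine ⟨Walk.cons (Or.inl ha : (lexProd G H).Adj (x, h) (a, h'))
      (q.map (constHom G H h')), ?_⟩
    exact congrArg (· + 1) (Walk.length_map _ _)

lemma dist_ne_col (hG : G.Connected) {x y : α} (hxy : x ≠ y) (h h' : β) :
    (lexProd G H).dist (x, h) (y, h') = G.dist x y := by
  obtain ⟨p, hp⟩ := (hG x y).exists_walk_length_eq_dist
  obtain ⟨w, hw⟩ := lift_walk hxy h h' p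
  have hle : (lexProd G H).dist (x, h) (y, h') ≤ G.dist x y := by
    calc (lexProd G H).dist (x, h) (y, h') ≤ w.length := SimpleGraph.dist_le w
    _ = G.dist x y := by rw [hw, hp]
  refine le_antisymm hle ?_
  obtain ⟨w', hw'⟩ := Walk.reachable w |>.exists_walk_length_eq_dist
  obtain ⟨p', hp'⟩ := proj_walk w'
  calc G.dist x y ≤ p'.length := SimpleGraph.dist_le p'
  _ ≤ w'.length := hp'
  _ = _ := hw'

lemma dist_same_adj {x : α} {h h' : β} (hadj : H.Adj h h') :
    (lexProd G H).dist (x, h) (x, h') = 1 :=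
  SimpleGraph.dist_eq_one_iff_adj.mpr (Or.inr ⟨rfl, hadj⟩)

lemma dist_same_nonadj (hG : G.Connected) [Nontrivial α] {x : α} {h h' : β}
    (hne : h ≠ h') (hadj : ¬H.Adj h h') :
    (lexProd G H).dist (x, h) (x, h') = 2 := by
  obtain ⟨z, hz⟩ := exists_adj hG x
  have w1 : (lexProd G H).Adj (x, h) (z, h) := Or.inl hz
  have w2 : (lexProd G H).Adj (z, h) (x, h') := Or.inl hz.symm
  have h2 : (lexProd G H).dist (x, h) (x, h') ≤ 2 := by
    calc (lexProd G H).dist (x, h) (x, h') ≤ (Walk.cons w1 (Walk.cons w2 Walk.nil)).length :=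
          SimpleGraph.dist_le _
    _ = 2 := by simp
  have h0 : (lexProd G H).dist (x, h) (x, h') ≠ 0 := by
    rw [SimpleGraph.dist_ne_zero_iff_ne_and_reachable]
    exact ⟨by simp [hne], (Walk.cons w1 (Walk.cons w2 Walk.nil)).reachable⟩
  have h1 : (lexProd G H).dist (x, h) (x, h') ≠ 1 := by
    intro h1
    rcases SimpleGraph.dist_eq_one_iff_adj.mp h1 with hg | ⟨-, hh⟩
    · exact G.irrefl hg
    · exact hadj hh
  omega

lemma dist_le_of_nbhd (hG : G.Connected) {x y a : α}
    (hsub : ∀ w, G.Adj x w → w = y ∨ G.Adj y w) (hax : a ≠ x) :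
    G.dist y a ≤ G.dist x a := by
  obtain ⟨p, hp⟩ := (hG x a).exists_walk_length_eq_dist
  cases p with
  | nil => exact absurd rfl hax.symm
  | @cons _ w _ hw q =>
    rw [← hp]
    rcases hsub w hw with hwy | hyw
    · calc G.dist y a = G.dist w a := by rw [hwy]
      _ ≤ q.length := SimpleGraph.dist_le q
      _ ≤ (Walk.cons hw q).length := by simp
    · exact SimpleGraph.dist_le (Walk.cons hyw q)

lemma twin_dist_eq (hG : G.Connected) {x y a : α} (hax : a ≠ x) (hay : a ≠ y)
    (hsub1 : ∀ w, G.Adj x w → w = y ∨ G.Adj y w)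
    (hsub2 : ∀ w, G.Adj y w → w = x ∨ G.Adj x w) :
    G.dist x a = G.dist y a :=
  le_antisymm (dist_le_of_nbhd hG hsub2 hay) (dist_le_of_nbhd hG hsub1 hax)

lemma false_twin_dist (hG : G.Connected) [Nontrivial α] {x y : α} (hxy : x ≠ y)
    (hnadj : ¬G.Adj x y) (hN : G.neighborSet x = G.neighborSet y) :
    G.dist x y = 2 := by
  obtain ⟨z, hz⟩ := exists_adj hG x
  have hz' : G.Adj y z := by
    have : z ∈ G.neighborSet x := hz
    rwa [hN] at this
  have h2 : G.dist x y ≤ 2 := by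
    calc G.dist x y ≤ (Walk.cons hz (Walk.cons hz'.symm Walk.nil)).length :=
          SimpleGraph.dist_le _
    _ = 2 := by simp
  have h0 : G.dist x y ≠ 0 := by
    rw [SimpleGraph.dist_ne_zero_iff_ne_and_reachable]
    exact ⟨hxy, hG x y⟩
  have h1 : G.dist x y ≠ 1 := fun h1 => hnadj (SimpleGraph.dist_eq_one_iff_adj.mp h1)
  omega

lemma resolve_strict (hG : G.Connected) [Nontrivial α] {T : Set β}
    (hs : IsStrictlyLocatingSet H T) (x : α) (h : β) :
    ∃ k ∈ T, (lexProd G H).dist (x, h) (x, k) ≠ 1 := by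
  by_cases hh : h ∈ T
  · exact ⟨h, hh, by rw [SimpleGraph.dist_self]; omega⟩
  · obtain ⟨k, hkT, hk⟩ := Set.exists_of_ssubset
      (Set.ssubset_iff_subset_ne.mpr ⟨Set.inter_subset_right, hs.2 h hh⟩)
    have hk' : ¬H.Adj h k := fun ha => hk ⟨ha, hkT⟩
    have hkh : h ≠ k := fun e => hh (e ▸ hkT)
    exact ⟨k, hkT, by rw [dist_same_nonadj hG hkh hk']; omega⟩

lemma resolve_dom (hG : G.Connected) [Nontrivial α] {T : Set β}
    (hd : IsDominatingSet H T) (x : α) (h : β) :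
    ∃ k ∈ T, (lexProd G H).dist (x, h) (x, k) ≠ 2 := by
  by_cases hh : h ∈ T
  · exact ⟨h, hh, by rw [SimpleGraph.dist_self]; omega⟩
  · obtain ⟨k, hkT, hadj⟩ := hd h hh
    exact ⟨k, hkT, by rw [dist_same_adj hadj]; omega⟩

end Stmt16Aux

open Stmt16Aux SimpleGraph in
/-- Characterization of resolving sets of the lexicographic product `G ∘ H`
when `Δ(H) ≤ n(H) - 2`. -/


theorem stmt16 {α β : Type*} [Fintype β] (G : SimpleGraph α) (H : SimpleGraph β)
    [DecidableRel H.Adj] (hG : G.Connected) (hH : H.Connected)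
    [Nontrivial α] [Nontrivial β]
    (hΔ : H.maxDegree ≤ Fintype.card β - 2) (W : Set (α × β)) :
    IsResolvingSet (lexProd G H) W ↔
      ({x : α | ∃ h : β, (x, h) ∈ W} = Set.univ ∧
       (∀ x : α, IsLocatingSet H {h : β | (x, h) ∈ W}) ∧
       (∀ x y : α, G.Adj x y →
          insert x (G.neighborSet x) = insert y (G.neighborSet y) →
          (IsStrictlyLocatingSet H {h : β | (x, h) ∈ W} ∨
           IsStrictlyLocatingSet H {h : β | (y, h) ∈ W})) ∧
       (∀ x y : α, x ≠ y → ¬ G.Adj x y →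
          G.neighborSet x = G.neighborSet y →
          (IsDominatingSet H {h : β | (x, h) ∈ W} ∨
           IsDominatingSet H {h : β | (y, h) ∈ W}))) := by
  constructor
  · -- forward direction
    intro hres
    have hloc : ∀ x : α, IsLocatingSet H {h : β | (x, h) ∈ W} := by
      intro x u hu v hv huv hNN
      obtain ⟨⟨a, k⟩, hzW, hdist⟩ := hres (x, u) (x, v) (by simp [huv])
      apply hdist
      by_cases hax : a = x
      · subst hax
        have hkT : k ∈ {h : β | (a, h) ∈ W} := hzW
        have hku : u ≠ k := fun e => hu (e ▸ hkT)
        have hkv : v ≠ k := fun e => hv (e ▸ hkT)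
        have hiff : H.Adj u k ↔ H.Adj v k := by
          constructor
          · intro ha
            have : k ∈ H.neighborSet u ∩ {h : β | (a, h) ∈ W} := ⟨ha, hkT⟩
            rw [hNN] at this
            exact this.1
          · intro ha
            have : k ∈ H.neighborSet v ∩ {h : β | (a, h) ∈ W} := ⟨ha, hkT⟩
            rw [← hNN] at this
            exact this.1
        by_cases hadj : H.Adj u k
        · rw [dist_same_adj hadj, dist_same_adj (hiff.mp hadj)]
        · rw [dist_same_nonadj hG hku hadj,
            dist_same_nonadj hG hkv (fun ha => hadj (hiff.mpr ha))]
      · rw [dist_ne_col hG (Ne.symm hax) u k, dist_ne_col hG (Ne.symm hax) v k]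
    have huniv : {x : α | ∃ h : β, (x, h) ∈ W} = Set.univ := by
      ext x
      simp only [Set.mem_setOf_eq, Set.mem_univ, iff_true]
      by_contra hno
      push_neg at hno
      have hTe : {h : β | (x, h) ∈ W} = (∅ : Set β) := by
        ext h; simpa using hno h
      obtain ⟨u, v, huv⟩ := exists_pair_ne β
      exact hloc x u (by rw [hTe]; exact Set.notMem_empty u)
        v (by rw [hTe]; exact Set.notMem_empty v) huv (by rw [hTe]; simp)
    refine ⟨huniv, hloc, ?_, ?_⟩
    · -- true twins
      intro x y hadj hN
      by_contra hcon
      push_neg at hcon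
      obtain ⟨hns1, hns2⟩ := hcon
      have hex : ∀ z : α, ¬IsStrictlyLocatingSet H {h : β | (z, h) ∈ W} →
          ∃ u ∉ {h : β | (z, h) ∈ W},
            H.neighborSet u ∩ {h : β | (z, h) ∈ W} = {h : β | (z, h) ∈ W} := by
        intro z hns
        by_contra hx
        push_neg at hx
        exact hns ⟨hloc z, hx⟩
      obtain ⟨h, hh, hNh⟩ := hex x hns1
      obtain ⟨h', hh', hNh'⟩ := hex y hns2
      obtain ⟨⟨a, k⟩, hzW, hdist⟩ := hres (x, h) (y, h') (by simp [hadj.ne])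
      apply hdist
      have hsub1 : ∀ w, G.Adj x w → w = y ∨ G.Adj y w := by
        intro w hw
        have : w ∈ insert y (G.neighborSet y) := by
          rw [← hN]; exact Set.mem_insert_of_mem _ hw
        rcases Set.mem_insert_iff.mp this with hw' | hw'
        exacts [Or.inl hw', Or.inr hw']
      have hsub2 : ∀ w, G.Adj y w → w = x ∨ G.Adj x w := by
        intro w hw
        have : w ∈ insert x (G.neighborSet x) := by
          rw [hN]; exact Set.mem_insert_of_mem _ hw
        rcases Set.mem_insert_iff.mp this with hw' | hw'
        exacts [Or.inl hw', Or.inr hw']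
      by_cases hax : a = x
      · subst hax
        have hkT : k ∈ {h : β | (a, h) ∈ W} := hzW
        have hAdjhk : H.Adj h k := by
          have : k ∈ H.neighborSet h ∩ {h : β | (a, h) ∈ W} := by rw [hNh]; exact hkT
          exact this.1
        rw [dist_same_adj hAdjhk, dist_ne_col hG hadj.ne' h' k,
          SimpleGraph.dist_eq_one_iff_adj.mpr hadj.symm]
      · by_cases hay : a = y
        · subst hay
          have hkT : k ∈ {h : β | (a, h) ∈ W} := hzW
          have hAdjhk : H.Adj h' k := by
            have : k ∈ H.neighborSet h' ∩ {h : β | (a, h) ∈ W} := by rw [hNh']; exact hkT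
            exact this.1
          rw [dist_same_adj hAdjhk, dist_ne_col hG hadj.ne h k,
            SimpleGraph.dist_eq_one_iff_adj.mpr hadj]
        · rw [dist_ne_col hG (Ne.symm hax) h k, dist_ne_col hG (Ne.symm hay) h' k]
          exact twin_dist_eq hG hax hay hsub1 hsub2
    · -- false twins
      intro x y hxy hnadj hN
      by_contra hcon
      push_neg at hcon
      obtain ⟨hnd1, hnd2⟩ := hcon
      have hex : ∀ z : α, ¬IsDominatingSet H {h : β | (z, h) ∈ W} →
          ∃ u ∉ {h : β | (z, h) ∈ W},
            ∀ k ∈ {h : β | (z, h) ∈ W}, ¬H.Adj u k := by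
        intro z hnd
        by_contra hx
        push_neg at hx
        exact hnd hx
      obtain ⟨h, hh, hNh⟩ := hex x hnd1
      obtain ⟨h', hh', hNh'⟩ := hex y hnd2
      obtain ⟨⟨a, k⟩, hzW, hdist⟩ := hres (x, h) (y, h') (by simp [hxy])
      apply hdist
      have hd2 : G.dist x y = 2 := false_twin_dist hG hxy hnadj hN
      have hsub1 : ∀ w, G.Adj x w → w = y ∨ G.Adj y w := by
        intro w hw
        right
        have : w ∈ G.neighborSet x := hw
        rwa [hN] at this
      have hsub2 : ∀ w, G.Adj y w → w = x ∨ G.Adj x w := by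
        intro w hw
        right
        have : w ∈ G.neighborSet y := hw
        rwa [← hN] at this
      by_cases hax : a = x
      · subst hax
        have hkT : k ∈ {h : β | (a, h) ∈ W} := hzW
        have hkh : h ≠ k := fun e => hh (e ▸ hkT)
        rw [dist_same_nonadj hG hkh (hNh k hkT), dist_ne_col hG hxy.symm h' k,
          SimpleGraph.dist_comm, hd2]
      · by_cases hay : a = y
        · subst hay
          have hkT : k ∈ {h : β | (a, h) ∈ W} := hzW
          have hkh : h' ≠ k := fun e => hh' (e ▸ hkT)
          rw [dist_same_nonadj hG hkh (hNh' k hkT), dist_ne_col hG hxy h k, hd2]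
        · rw [dist_ne_col hG (Ne.symm hax) h k, dist_ne_col hG (Ne.symm hay) h' k]
          exact twin_dist_eq hG hax hay hsub1 hsub2
  · -- backward direction
    rintro ⟨huniv, hloc, htw, hfw⟩
    rintro ⟨x, h⟩ ⟨y, h'⟩ hpq
    by_cases hxy : x = y
    · subst hxy
      have hne : h ≠ h' := fun e => hpq (by rw [e])
      set T := {h : β | (x, h) ∈ W} with hT
      by_cases hh : h ∈ T
      · refine ⟨(x, h), hh, ?_⟩
        rw [SimpleGraph.dist_self]
        by_cases ha : H.Adj h' h
        · rw [dist_same_adj ha]; omega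
        · rw [dist_same_nonadj hG (Ne.symm hne) ha]; omega
      · by_cases hh' : h' ∈ T
        · refine ⟨(x, h'), hh', ?_⟩
          rw [SimpleGraph.dist_self]
          by_cases ha : H.Adj h h'
          · rw [dist_same_adj ha]; omega
          · rw [dist_same_nonadj hG hne ha]; omega
        · have hNN := hloc x h hh h' hh' hne
          rw [Ne, Set.ext_iff] at hNN
          push_neg at hNN
          obtain ⟨k, hk⟩ := hNN
          rcases hk with ⟨hA, hB⟩ | ⟨hA, hB⟩
          · have hkT : k ∈ T := hA.2
            have hnadj : ¬H.Adj h' k := fun ha => hB ⟨ha, hkT⟩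
            have hkh' : h' ≠ k := fun e => hh' (e ▸ hkT)
            refine ⟨(x, k), hkT, ?_⟩
            rw [dist_same_adj hA.1, dist_same_nonadj hG hkh' hnadj]
            omega
          · have hkT : k ∈ T := hB.2
            have hnadj : ¬H.Adj h k := fun ha => hA ⟨ha, hkT⟩
            have hkh : h ≠ k := fun e => hh (e ▸ hkT)
            refine ⟨(x, k), hkT, ?_⟩
            rw [dist_same_adj hB.1, dist_same_nonadj hG hkh hnadj]
            omega
    · by_cases hsep : ∃ a, a ≠ x ∧ a ≠ y ∧ G.dist x a ≠ G.dist y a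
      · obtain ⟨a, hax, hay, hda⟩ := hsep
        have : a ∈ {x : α | ∃ h : β, (x, h) ∈ W} := by rw [huniv]; trivial
        obtain ⟨k, hk⟩ := this
        refine ⟨(a, k), hk, ?_⟩
        rw [dist_ne_col hG (Ne.symm hax) h k, dist_ne_col hG (Ne.symm hay) h' k]
        exact hda
      · push_neg at hsep
        by_cases hadj : G.Adj x y
        · have hNxy : insert x (G.neighborSet x) = insert y (G.neighborSet y) := by
            ext w
            simp only [Set.mem_insert_iff, mem_neighborSet]
            constructor
            · rintro (rfl | hw)
              · exact Or.inr hadj.symm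
              · by_cases hwy : w = y
                · exact Or.inl hwy
                · refine Or.inr (SimpleGraph.dist_eq_one_iff_adj.mp ?_)
                  rw [← hsep w hw.ne' hwy, SimpleGraph.dist_eq_one_iff_adj.mpr hw]
            · rintro (rfl | hw)
              · exact Or.inr hadj
              · by_cases hwx : w = x
                · exact Or.inl hwx
                · refine Or.inr (SimpleGraph.dist_eq_one_iff_adj.mp ?_)
                  rw [hsep w hwx hw.ne', SimpleGraph.dist_eq_one_iff_adj.mpr hw]
          rcases htw x y hadj hNxy with hs | hs
          · obtain ⟨k, hkT, hk⟩ := resolve_strict (H := H) hG hs x h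
            refine ⟨(x, k), hkT, ?_⟩
            rw [dist_ne_col hG hadj.ne' h' k, SimpleGraph.dist_eq_one_iff_adj.mpr hadj.symm]
            exact hk
          · obtain ⟨k, hkT, hk⟩ := resolve_strict (H := H) hG hs y h'
            refine ⟨(y, k), hkT, ?_⟩
            rw [dist_ne_col hG hadj.ne h k, SimpleGraph.dist_eq_one_iff_adj.mpr hadj]
            exact fun e => hk (e.symm)
        · have hN : G.neighborSet x = G.neighborSet y := by
            ext w
            simp only [mem_neighborSet]
            constructor
            · intro hw
              have hwy : w ≠ y := fun e => hadj (e ▸ hw)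
              refine SimpleGraph.dist_eq_one_iff_adj.mp ?_
              rw [← hsep w hw.ne' hwy, SimpleGraph.dist_eq_one_iff_adj.mpr hw]
            · intro hw
              have hwx : w ≠ x := fun e => hadj (e ▸ hw.symm) -- w = x, Adj y w: Adj y x
              refine SimpleGraph.dist_eq_one_iff_adj.mp ?_
              rw [hsep w hwx hw.ne', SimpleGraph.dist_eq_one_iff_adj.mpr hw]
          have hd2 : G.dist x y = 2 := false_twin_dist hG hxy hadj hN
          rcases hfw x y hxy hadj hN with hs | hs
          · obtain ⟨k, hkT, hk⟩ := resolve_dom (H := H) hG hs x h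
            refine ⟨(x, k), hkT, ?_⟩
            have hd2' : G.dist y x = 2 := by rw [SimpleGraph.dist_comm]; exact hd2
            rw [dist_ne_col hG (Ne.symm hxy) h' k, hd2']
            exact hk
          · obtain ⟨k, hkT, hk⟩ := resolve_dom (H := H) hG hs y h'
            refine ⟨(y, k), hkT, ?_⟩
            rw [dist_ne_col hG hxy h k, hd2]
            exact fun e => hk (e.symm)
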